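/- arXiv:1707.09048 — 3 statements merged into one kernel-verified Lean document; each statement's English description precedes it below -/
import Mathlib

section
/- Let x ≥ y ≥ 2 be real numbers and let n be a positive integer with n ≤ x/y and P(n) ≤ y. Then there exist positive integers a, b with n = a·b, a ≤ √x and b ≤ √x. Consequently, Ψ(x/y, y) ≤ A(x,y) ≤ Ψ(x,y). -/
open Real Filter
open scoped Classical

/-- The set of `y`-smooth positive integers up to `x` (as a finset):
`n` with `1 ≤ n ≤ x` all of whose prime factors are at most `y`. -/
noncomputable def smoothFinset (x y : ℝ) : Finset ℕ :=
  (Finset.Icc 1 ⌊x⌋₊).filter (fun n => ∀ p : ℕ, p.Prime → p ∣ n → (p : ℝ) ≤ y)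

/-- `Ψ(x,y)`, the number of `y`-smooth integers up to `x`. -/
noncomputable def Psi (x y : ℝ) : ℝ := ((smoothFinset x y).card : ℝ)

/-- `A(x,y)`, the number of distinct products `a*b` with `a, b ∈ S(√x, y)`. -/
noncomputable def prodCount (x y : ℝ) : ℝ :=
  ((((smoothFinset (Real.sqrt x) y) ×ˢ (smoothFinset (Real.sqrt x) y)).image
    (fun p => p.1 * p.2)).card : ℝ)

/-- Every `y`-smooth `n ≤ x/y` splits as a product of two factors `≤ √x`;
consequently `Ψ(x/y, y) ≤ A(x,y) ≤ Ψ(x,y)`. -/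
theorem stmt_3 (x y : ℝ) (hxy : y ≤ x) (hy : 2 ≤ y) :
    (∀ n : ℕ, 0 < n → (n : ℝ) ≤ x / y →
        (∀ p : ℕ, p.Prime → p ∣ n → (p : ℝ) ≤ y) →
        ∃ a b : ℕ, 0 < a ∧ 0 < b ∧ n = a * b ∧
          (a : ℝ) ≤ Real.sqrt x ∧ (b : ℝ) ≤ Real.sqrt x) ∧
    Psi (x / y) y ≤ prodCount x y ∧ prodCount x y ≤ Psi x y := by
  have hx2 : (2:ℝ) ≤ x := le_trans hy hxy
  have hx0 : (0:ℝ) ≤ x := by linarith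
  have hy0 : (0:ℝ) < y := by linarith
  have hsx : Real.sqrt x * Real.sqrt x = x := Real.mul_self_sqrt hx0
  have hsx1 : (1:ℝ) ≤ Real.sqrt x := by
    rw [show (1:ℝ) = Real.sqrt 1 by simp]
    exact Real.sqrt_le_sqrt (by linarith)
  have hsx0 : (0:ℝ) < Real.sqrt x := by linarith
  have key : ∀ n : ℕ, 0 < n → (n : ℝ) ≤ x / y →
        (∀ p : ℕ, p.Prime → p ∣ n → (p : ℝ) ≤ y) →
        ∃ a b : ℕ, 0 < a ∧ 0 < b ∧ n = a * b ∧
          (a : ℝ) ≤ Real.sqrt x ∧ (b : ℝ) ≤ Real.sqrt x := by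
    intro n hn hnx hsm
    set D := n.divisors.filter (fun a : ℕ => (a:ℝ) ≤ Real.sqrt x) with hD
    have h1 : 1 ∈ D := by
      simp [hD, Nat.one_mem_divisors, hn.ne', hsx1]
    set a := D.max' ⟨1, h1⟩ with ha
    have haD : a ∈ D := D.max'_mem _
    have hadvd : a ∣ n := by
      have h := (Finset.mem_filter.mp haD).1
      exact (Nat.mem_divisors.mp h).1
    have hale : (a:ℝ) ≤ Real.sqrt x := (Finset.mem_filter.mp haD).2
    have ha0 : 0 < a := Nat.pos_of_dvd_of_pos hadvd hn
    obtain ⟨b, hb⟩ := hadvd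
    have hb0 : 0 < b := by
      rcases Nat.eq_zero_or_pos b with h | h
      · subst h; simp at hb; omega
      · exact h
    refine ⟨a, b, ha0, hb0, hb, hale, ?_⟩
    by_contra hbc
    push_neg at hbc
    have hb2 : 2 ≤ b := by
      have h1b : (1:ℝ) < (b:ℝ) := lt_of_le_of_lt hsx1 hbc
      exact_mod_cast Nat.succ_le_of_lt (by exact_mod_cast h1b)
    set p := b.minFac with hp
    have hpp : p.Prime := Nat.minFac_prime (by omega)
    have hpb : p ∣ b := Nat.minFac_dvd b
    have hpy : (p:ℝ) ≤ y := hsm p hpp (hb ▸ Dvd.dvd.mul_left hpb a)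
    have hapdvd : a * p ∣ n := by
      rw [hb]; exact mul_dvd_mul_left a hpb
    have hap_not : ¬ ((a * p : ℕ) : ℝ) ≤ Real.sqrt x := by
      intro h
      have hmem : a * p ∈ D := by
        simp only [hD, Finset.mem_filter, Nat.mem_divisors]
        exact ⟨⟨hapdvd, hn.ne'⟩, h⟩
      have hle : a * p ≤ a := by rw [ha]; exact D.le_max' _ hmem
      have hp2 : 2 ≤ p := hpp.two_le
      nlinarith [hle, hp2, ha0]
    push_neg at hap_not
    have h1a : (1:ℝ) ≤ (a:ℝ) := by exact_mod_cast ha0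
    have h2p : (2:ℝ) ≤ (p:ℝ) := by exact_mod_cast hpp.two_le
    have hnab : (n:ℝ) = (a:ℝ) * (b:ℝ) := by exact_mod_cast congrArg (Nat.cast (R := ℝ)) hb
    have hxy' : (n:ℝ) * y ≤ x := by
      rw [le_div_iff₀ hy0] at hnx
      linarith
    push_cast at hap_not
    nlinarith [mul_pos hsx0 hsx0]
  refine ⟨key, ?_, ?_⟩
  · unfold Psi prodCount
    have hsub : smoothFinset (x/y) y ⊆
        ((smoothFinset (Real.sqrt x) y) ×ˢ (smoothFinset (Real.sqrt x) y)).image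
          (fun p => p.1 * p.2) := by
      intro n hnmem
      simp only [smoothFinset, Finset.mem_filter, Finset.mem_Icc] at hnmem
      obtain ⟨⟨h1n, hnfl⟩, hsm⟩ := hnmem
      have hn0 : 0 < n := h1n
      have hnx : (n:ℝ) ≤ x / y := (Nat.le_floor_iff (by positivity)).mp hnfl
      obtain ⟨a, b, ha0, hb0, hab, hale, hble⟩ := key n hn0 hnx hsm
      rw [Finset.mem_image]
      refine ⟨(a, b), ?_, hab.symm⟩
      rw [Finset.mem_product]
      constructor <;> simp only [smoothFinset, Finset.mem_filter, Finset.mem_Icc]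
      · exact ⟨⟨ha0, Nat.le_floor hale⟩, fun p hp hpd => hsm p hp (hab ▸ hpd.mul_right b)⟩
      · exact ⟨⟨hb0, Nat.le_floor hble⟩, fun p hp hpd => hsm p hp (hab ▸ hpd.mul_left a)⟩
    exact_mod_cast Finset.card_le_card hsub
  · unfold Psi prodCount
    have hsub : ((smoothFinset (Real.sqrt x) y) ×ˢ (smoothFinset (Real.sqrt x) y)).image
          (fun p => p.1 * p.2) ⊆ smoothFinset x y := by
      intro m hm
      rw [Finset.mem_image] at hm
      obtain ⟨⟨a, b⟩, hmem, hab⟩ := hm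
      simp only at hab
      subst hab
      rw [Finset.mem_product] at hmem
      obtain ⟨hma, hmb⟩ := hmem
      simp only [smoothFinset, Finset.mem_filter, Finset.mem_Icc] at hma hmb ⊢
      obtain ⟨⟨ha1, hafl⟩, hasm⟩ := hma
      obtain ⟨⟨hb1, hbfl⟩, hbsm⟩ := hmb
      have hale : (a:ℝ) ≤ Real.sqrt x := (Nat.le_floor_iff (by positivity)).mp hafl
      have hble : (b:ℝ) ≤ Real.sqrt x := (Nat.le_floor_iff (by positivity)).mp hbfl
      refine ⟨⟨Nat.one_le_iff_ne_zero.mpr (by positivity), ?_⟩, ?_⟩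
      · apply Nat.le_floor
        push_cast
        calc (a:ℝ) * b ≤ Real.sqrt x * Real.sqrt x := by
              apply mul_le_mul hale hble (by positivity) (by positivity)
          _ = x := hsx
      · intro p hp hpd
        rcases (Nat.Prime.dvd_mul hp).mp hpd with h | h
        · exact hasm p hp h
        · exact hbsm p hp h
    exact_mod_cast Finset.card_le_card hsub
end

section
/- For every ε > 0 there exist δ > 0 and X₀ such that for all real x ≥ X₀ and all real y with 2 ≤ y ≤ δ·log x, one has |Ψ(x/y, y) − Ψ(x,y)| ≤ ε·Ψ(x,y). (That is, Ψ(x/y, y) ∼ Ψ(x,y) as x → ∞ when y ≥ 2 and y = o(log x).) -/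
open Real Filter
open scoped Classical

private lemma smoothFinset_mono {x x' : ℝ} (y : ℝ) (h : x ≤ x') :
    smoothFinset x y ⊆ smoothFinset x' y := by
  intro n hn
  simp only [smoothFinset, Finset.mem_filter, Finset.mem_Icc] at hn ⊢
  exact ⟨⟨hn.1.1, hn.1.2.trans (Nat.floor_le_floor h)⟩, hn.2⟩

/-- Chebyshev-type bound: `∑_{q ≤ y prime} (log y + log q) ≤ 7y`. -/
private lemma cheb_bound {y : ℝ} (hy : 2 ≤ y) :
    ∑ q ∈ (Finset.range (⌊y⌋₊ + 1)).filter Nat.Prime,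
      (Real.log y + Real.log (q : ℝ)) ≤ 7 * y := by
  set P := (Finset.range (⌊y⌋₊ + 1)).filter Nat.Prime with hP
  have hy0 : (0:ℝ) < y := by linarith
  have hsq1 : (1:ℝ) ≤ Real.sqrt y := by
    rw [show (1:ℝ) = Real.sqrt 1 by simp]
    exact Real.sqrt_le_sqrt (by linarith)
  have hlogy0 : 0 ≤ Real.log y := Real.log_nonneg (by linarith)
  have hWeq : ∑ q ∈ P, Real.log (q:ℝ) = Real.log ((primorial ⌊y⌋₊ : ℕ) : ℝ) := by
    rw [← Real.log_prod (fun q hq =>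
      Nat.cast_ne_zero.mpr ((Finset.mem_filter.mp hq).2.pos.ne'))]
    congr 1
    unfold primorial
    push_cast
    rfl
  have hW0 : 0 ≤ ∑ q ∈ P, Real.log (q:ℝ) := by
    apply Finset.sum_nonneg
    intro q hq
    have hq' : q.Prime := (Finset.mem_filter.mp hq).2
    exact Real.log_nonneg (by exact_mod_cast hq'.one_lt.le)
  have hW : ∑ q ∈ P, Real.log (q:ℝ) ≤ 1.4 * y := by
    rw [hWeq]
    have h1 : ((primorial ⌊y⌋₊ : ℕ) : ℝ) ≤ ((4 ^ ⌊y⌋₊ : ℕ) : ℝ) := by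
      exact_mod_cast primorial_le_4_pow ⌊y⌋₊
    have h2 : Real.log ((primorial ⌊y⌋₊ : ℕ) : ℝ) ≤ Real.log ((4 ^ ⌊y⌋₊ : ℕ) : ℝ) := by
      apply Real.log_le_log _ h1
      have : 0 < primorial ⌊y⌋₊ := primorial_pos ⌊y⌋₊
      exact_mod_cast this
    refine h2.trans ?_
    push_cast
    rw [Real.log_pow]
    have h4 : Real.log 4 ≤ 1.4 := by
      have h44 : (4:ℝ) = 2 ^ 2 := by norm_num
      rw [h44, Real.log_pow]
      have := Real.log_two_lt_d9
      push_cast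
      linarith
    have hfl : (⌊y⌋₊ : ℝ) ≤ y := Nat.floor_le hy0.le
    calc (⌊y⌋₊ : ℝ) * Real.log 4 ≤ y * 1.4 :=
          mul_le_mul hfl h4 (Real.log_nonneg (by norm_num)) hy0.le
      _ = 1.4 * y := by ring
  have hky : ∑ q ∈ P, Real.log y ≤ 2 * y + 2 * ∑ q ∈ P, Real.log (q:ℝ) := by
    rw [← Finset.sum_filter_add_sum_filter_not P (fun q : ℕ => (q:ℝ) ≤ Real.sqrt y)]
    have hsmall : ∑ q ∈ P.filter (fun q : ℕ => (q:ℝ) ≤ Real.sqrt y), Real.log y ≤ 2 * y := by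
      rw [Finset.sum_const, nsmul_eq_mul]
      have hcard : (P.filter (fun q : ℕ => (q:ℝ) ≤ Real.sqrt y)).card ≤ ⌊Real.sqrt y⌋₊ + 1 := by
        have hsub : P.filter (fun q : ℕ => (q:ℝ) ≤ Real.sqrt y) ⊆
            Finset.range (⌊Real.sqrt y⌋₊ + 1) := by
          intro q hq
          have hqle : (q:ℝ) ≤ Real.sqrt y := (Finset.mem_filter.mp hq).2
          exact Finset.mem_range.mpr (Nat.lt_succ_of_le (Nat.le_floor hqle))
        calc (P.filter (fun q : ℕ => (q:ℝ) ≤ Real.sqrt y)).card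
            ≤ (Finset.range (⌊Real.sqrt y⌋₊ + 1)).card := Finset.card_le_card hsub
          _ = ⌊Real.sqrt y⌋₊ + 1 := Finset.card_range _
      have hcard' : ((P.filter (fun q : ℕ => (q:ℝ) ≤ Real.sqrt y)).card : ℝ)
          ≤ Real.sqrt y + 1 := by
        calc ((P.filter (fun q : ℕ => (q:ℝ) ≤ Real.sqrt y)).card : ℝ)
            ≤ (⌊Real.sqrt y⌋₊ : ℝ) + 1 := by exact_mod_cast hcard
          _ ≤ Real.sqrt y + 1 := by
              have := Nat.floor_le (Real.sqrt_nonneg y)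
              linarith
      have hlogy2 : Real.log y ≤ 2 * (Real.sqrt y - 1) := by
        have h1 : Real.log (Real.sqrt y) ≤ Real.sqrt y - 1 :=
          Real.log_le_sub_one_of_pos (by linarith)
        have h2 : Real.log (Real.sqrt y) = Real.log y / 2 := Real.log_sqrt hy0.le
        linarith
      calc ((P.filter (fun q : ℕ => (q:ℝ) ≤ Real.sqrt y)).card : ℝ) * Real.log y
          ≤ (Real.sqrt y + 1) * (2 * (Real.sqrt y - 1)) :=
            mul_le_mul hcard' hlogy2 hlogy0 (by linarith)
        _ = 2 * (Real.sqrt y * Real.sqrt y - 1) := by ring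
        _ = 2 * (y - 1) := by rw [Real.mul_self_sqrt hy0.le]
        _ ≤ 2 * y := by linarith
    have hbig : ∑ q ∈ P.filter (fun q : ℕ => ¬ ((q:ℝ) ≤ Real.sqrt y)), Real.log y
        ≤ 2 * ∑ q ∈ P, Real.log (q:ℝ) := by
      have hstep : ∑ q ∈ P.filter (fun q : ℕ => ¬ ((q:ℝ) ≤ Real.sqrt y)), Real.log y
          ≤ ∑ q ∈ P.filter (fun q : ℕ => ¬ ((q:ℝ) ≤ Real.sqrt y)), 2 * Real.log (q:ℝ) := by
        apply Finset.sum_le_sum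
        intro q hq
        have hqgt : Real.sqrt y < (q:ℝ) := lt_of_not_ge (Finset.mem_filter.mp hq).2
        have hlog : Real.log (Real.sqrt y) ≤ Real.log (q:ℝ) :=
          Real.log_le_log (by linarith) hqgt.le
        rw [Real.log_sqrt hy0.le] at hlog
        linarith
      refine hstep.trans ?_
      have hmono : ∑ q ∈ P.filter (fun q : ℕ => ¬ ((q:ℝ) ≤ Real.sqrt y)), Real.log (q:ℝ)
          ≤ ∑ q ∈ P, Real.log (q:ℝ) := by
        apply Finset.sum_le_sum_of_subset_of_nonneg (Finset.filter_subset _ _)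
        intro q hq _
        have hq' : q.Prime := (Finset.mem_filter.mp hq).2
        exact Real.log_nonneg (by exact_mod_cast hq'.one_lt.le)
      calc ∑ q ∈ P.filter (fun q : ℕ => ¬ ((q:ℝ) ≤ Real.sqrt y)), 2 * Real.log (q:ℝ)
          = 2 * ∑ q ∈ P.filter (fun q : ℕ => ¬ ((q:ℝ) ≤ Real.sqrt y)), Real.log (q:ℝ) := by
            rw [Finset.mul_sum]
        _ ≤ 2 * ∑ q ∈ P, Real.log (q:ℝ) := by linarith
    linarith
  rw [Finset.sum_add_distrib]
  linarith

/-- Lemma (smally): `Ψ(x/y, y) ∼ Ψ(x,y)` when `y ≥ 2` and `y = o(log x)`. -/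
theorem stmt_4 :
    ∀ ε : ℝ, 0 < ε → ∃ δ : ℝ, 0 < δ ∧ ∃ X₀ : ℝ,
      ∀ x y : ℝ, X₀ ≤ x → 2 ≤ y → y ≤ δ * Real.log x →
        |Psi (x / y) y - Psi x y| ≤ ε * Psi x y := by
  intro ε hε
  refine ⟨min (1/16) (ε/14), lt_min (by norm_num) (by linarith), 2, ?_⟩
  intro x y hx hy hyx
  set δ := min (1/16) (ε/14) with hδdef
  have hδ16 : δ ≤ 1/16 := min_le_left _ _
  have hδε : δ ≤ ε/14 := min_le_right _ _
  have hδ0 : 0 < δ := lt_min (by norm_num) (by linarith)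
  have hx0 : (0:ℝ) < x := by linarith
  have hx1 : (1:ℝ) < x := by linarith
  have hlogx0 : 0 < Real.log x := Real.log_pos hx1
  have hy0 : (0:ℝ) < y := by linarith
  have hy1 : (1:ℝ) ≤ y := by linarith
  have hxy0 : (0:ℝ) < x / y := by positivity
  have hlogy_le : Real.log y ≤ y := by
    have := Real.log_le_sub_one_of_pos hy0
    linarith
  set P := (Finset.range (⌊y⌋₊ + 1)).filter Nat.Prime with hPdef
  set C := ∑ q ∈ P, (Real.log y + Real.log (q:ℝ)) with hCdef
  have hC7 : C ≤ 7 * y := cheb_bound hy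
  have hlogy0 : 0 ≤ Real.log y := Real.log_nonneg hy1
  have hC0 : 0 ≤ C := by
    apply Finset.sum_nonneg
    intro q hq
    have hq' : q.Prime := (Finset.mem_filter.mp hq).2
    have : 0 ≤ Real.log (q:ℝ) := Real.log_nonneg (by exact_mod_cast hq'.one_lt.le)
    linarith
  have hyceil : 2 ≤ ⌈y⌉₊ := by
    have h2 : (2:ℝ) ≤ (⌈y⌉₊:ℝ) := le_trans hy (Nat.le_ceil y)
    exact_mod_cast h2
  set d : ℕ → ℕ := fun q => Nat.clog q ⌈y⌉₊ with hddef
  have hq_facts : ∀ q ∈ P, q.Prime := fun q hq => (Finset.mem_filter.mp hq).2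
  have hd_pos : ∀ q ∈ P, 0 < d q := by
    intro q hq
    exact Nat.clog_pos (hq_facts q hq).one_lt hyceil
  have hD_ge : ∀ q ∈ P, y ≤ ((q:ℝ)) ^ (d q) := by
    intro q hq
    have h1 : ⌈y⌉₊ ≤ q ^ (d q) := Nat.le_pow_clog (hq_facts q hq).one_lt _
    calc y ≤ (⌈y⌉₊ : ℝ) := Nat.le_ceil y
      _ ≤ ((q ^ (d q) : ℕ) : ℝ) := by exact_mod_cast h1
      _ = (q:ℝ) ^ (d q) := by push_cast; ring
  have hD_le : ∀ q ∈ P, ((q:ℝ)) ^ (d q) ≤ (q:ℝ) * y := by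
    intro q hq
    have hq' := hq_facts q hq
    have h1 : q ^ (d q - 1) < ⌈y⌉₊ := Nat.pow_pred_clog_lt_self hq'.one_lt hyceil
    have h2 : q ^ (d q - 1) ≤ ⌈y⌉₊ - 1 := by omega
    have h3 : ((q:ℝ)) ^ (d q - 1) ≤ y := by
      have hc1 : 1 ≤ ⌈y⌉₊ := by omega
      have hc2 : ((⌈y⌉₊ - 1 : ℕ) : ℝ) ≤ y := by
        have hlt : (⌈y⌉₊ : ℝ) < y + 1 := Nat.ceil_lt_add_one hy0.le
        have hc3 : ((⌈y⌉₊ - 1 : ℕ) : ℝ) = (⌈y⌉₊ : ℝ) - 1 := by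
          push_cast [Nat.cast_sub hc1]
          ring
        linarith
      calc ((q:ℝ)) ^ (d q - 1) = ((q ^ (d q - 1) : ℕ) : ℝ) := by push_cast; ring
        _ ≤ ((⌈y⌉₊ - 1 : ℕ) : ℝ) := by exact_mod_cast h2
        _ ≤ y := hc2
    have hd1 : d q = (d q - 1) + 1 := (Nat.succ_pred_eq_of_pos (hd_pos q hq)).symm
    calc ((q:ℝ)) ^ (d q) = (q:ℝ) ^ ((d q - 1) + 1) := by rw [← hd1]
      _ = (q:ℝ) ^ (d q - 1) * (q:ℝ) := by rw [pow_succ]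
      _ ≤ y * (q:ℝ) := mul_le_mul_of_nonneg_right h3 (by positivity)
      _ = (q:ℝ) * y := by ring
  have hlogD_le : ∀ q ∈ P, Real.log ((q:ℝ) ^ (d q)) ≤ Real.log y + Real.log (q:ℝ) := by
    intro q hq
    have hq2 : (2:ℝ) ≤ (q:ℝ) := by exact_mod_cast (hq_facts q hq).two_le
    calc Real.log ((q:ℝ) ^ (d q)) ≤ Real.log ((q:ℝ) * y) :=
          Real.log_le_log (by positivity) (hD_le q hq)
      _ = Real.log (q:ℝ) + Real.log y := Real.log_mul (by linarith) (by linarith)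
      _ = Real.log y + Real.log (q:ℝ) := by ring
  have hlogD_nonneg : ∀ q ∈ P, 0 ≤ Real.log ((q:ℝ) ^ (d q)) := by
    intro q hq
    apply Real.log_nonneg
    calc (1:ℝ) ≤ y := hy1
      _ ≤ (q:ℝ) ^ (d q) := hD_ge q hq
  set S := smoothFinset x y with hSdef
  set Sr := smoothFinset (x/y) y with hSrdef
  have hsub : Sr ⊆ S := smoothFinset_mono y (div_le_self hx0.le hy1)
  set sh := S \ Sr with hshdef
  set t : ℕ → ℕ → ℕ := fun n q => n.factorization q / d q with htdef
  have hsh_mem : ∀ n ∈ sh, 1 ≤ n ∧ (n:ℝ) ≤ x ∧ x/y < (n:ℝ) ∧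
      (∀ p : ℕ, p.Prime → p ∣ n → (p:ℝ) ≤ y) := by
    intro n hn
    have hnS : n ∈ S := (Finset.mem_sdiff.mp hn).1
    have hnSr : n ∉ Sr := (Finset.mem_sdiff.mp hn).2
    simp only [hSdef, smoothFinset, Finset.mem_filter, Finset.mem_Icc] at hnS
    obtain ⟨⟨hn1, hnx⟩, hsmooth⟩ := hnS
    have hnxR : (n:ℝ) ≤ x := le_trans (by exact_mod_cast hnx) (Nat.floor_le hx0.le)
    have hgt : x/y < (n:ℝ) := by
      by_contra hc
      push_neg at hc
      apply hnSr
      simp only [hSrdef, smoothFinset, Finset.mem_filter, Finset.mem_Icc]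
      exact ⟨⟨hn1, Nat.le_floor hc⟩, hsmooth⟩
    exact ⟨hn1, hnxR, hgt, hsmooth⟩
  have hlogn : ∀ n ∈ sh, Real.log (n:ℝ)
      = ∑ q ∈ P, (n.factorization q : ℝ) * Real.log (q:ℝ) := by
    intro n hn
    obtain ⟨hn1, _, _, hsmooth⟩ := hsh_mem n hn
    have hn0 : n ≠ 0 := by omega
    have hsupp : n.primeFactors ⊆ P := by
      intro p hp
      rw [Nat.mem_primeFactors] at hp
      obtain ⟨hpp, hpd, _⟩ := hp
      have h1 : (p:ℝ) ≤ y := hsmooth p hpp hpd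
      have h2 : p ≤ ⌊y⌋₊ := Nat.le_floor h1
      exact Finset.mem_filter.mpr ⟨Finset.mem_range.mpr (Nat.lt_succ_of_le h2), hpp⟩
    have h1 : n = ∏ p ∈ n.primeFactors, p ^ n.factorization p := by
      conv_lhs => rw [← Nat.factorization_prod_pow_eq_self hn0]
      rfl
    have hprod : (n:ℝ) = ∏ p ∈ n.primeFactors, (p:ℝ) ^ (n.factorization p) := by
      conv_lhs => rw [h1]
      push_cast
      rfl
    rw [hprod, Real.log_prod]
    · rw [← Finset.sum_subset hsupp]
      · exact Finset.sum_congr rfl (fun p _ => Real.log_pow _ _)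
      · intro q hq hnq
        have hz : n.factorization q = 0 := by
          rw [← Nat.support_factorization] at hnq
          exact Finsupp.notMem_support_iff.mp hnq
        rw [hz]
        simp
    · intro p hp
      have hpp : p.Prime := Nat.prime_of_mem_primeFactors hp
      exact pow_ne_zero _ (Nat.cast_ne_zero.mpr hpp.pos.ne')
  have hlower : ∀ n ∈ sh, Real.log x - Real.log y - C
      ≤ ∑ q ∈ P, (t n q : ℝ) * Real.log ((q:ℝ) ^ (d q)) := by
    intro n hn
    obtain ⟨hn1, hnx, hgt, _⟩ := hsh_mem n hn
    have hlx : Real.log x - Real.log y ≤ Real.log (n:ℝ) := by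
      rw [← Real.log_div (by linarith) (by linarith)]
      exact Real.log_le_log hxy0 hgt.le
    have hterm : ∀ q ∈ P, (n.factorization q : ℝ) * Real.log (q:ℝ)
        ≤ (t n q : ℝ) * Real.log ((q:ℝ) ^ (d q)) + (Real.log y + Real.log (q:ℝ)) := by
      intro q hq
      have hq' := hq_facts q hq
      have hdq := hd_pos q hq
      have hlogq0 : 0 ≤ Real.log (q:ℝ) := Real.log_nonneg (by exact_mod_cast hq'.one_lt.le)
      have hnat : n.factorization q ≤ d q * (t n q) + d q := by
        have h1 := Nat.div_add_mod (n.factorization q) (d q)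
        have h2 := Nat.mod_lt (n.factorization q) hdq
        simp only [htdef]
        omega
      have hcast : (n.factorization q : ℝ) ≤ (d q : ℝ) * (t n q : ℝ) + (d q : ℝ) := by
        exact_mod_cast hnat
      have hlogDd : Real.log ((q:ℝ) ^ (d q)) = (d q : ℝ) * Real.log (q:ℝ) :=
        Real.log_pow _ _
      calc (n.factorization q : ℝ) * Real.log (q:ℝ)
          ≤ ((d q : ℝ) * (t n q : ℝ) + (d q : ℝ)) * Real.log (q:ℝ) :=
            mul_le_mul_of_nonneg_right hcast hlogq0
        _ = (t n q : ℝ) * ((d q : ℝ) * Real.log (q:ℝ)) + (d q : ℝ) * Real.log (q:ℝ) := by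
            ring
        _ = (t n q : ℝ) * Real.log ((q:ℝ) ^ (d q)) + Real.log ((q:ℝ) ^ (d q)) := by
            rw [hlogDd]
        _ ≤ (t n q : ℝ) * Real.log ((q:ℝ) ^ (d q)) + (Real.log y + Real.log (q:ℝ)) := by
            linarith [hlogD_le q hq]
    calc Real.log x - Real.log y - C ≤ Real.log (n:ℝ) - C := by linarith
      _ = (∑ q ∈ P, (n.factorization q : ℝ) * Real.log (q:ℝ)) - C := by rw [hlogn n hn]
      _ ≤ (∑ q ∈ P, ((t n q : ℝ) * Real.log ((q:ℝ) ^ (d q))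
            + (Real.log y + Real.log (q:ℝ)))) - C := by
          have := Finset.sum_le_sum hterm
          linarith
      _ = ∑ q ∈ P, (t n q : ℝ) * Real.log ((q:ℝ) ^ (d q)) := by
          rw [Finset.sum_add_distrib, hCdef]
          ring
  -- key counting bound
  have hcount : ∀ q ∈ P, (∑ n ∈ sh, t n q) ≤ Sr.card := by
    intro q hq
    have hq' := hq_facts q hq
    have hdq := hd_pos q hq
    have hq1 : 1 < q := hq'.one_lt
    have hsum : (∑ n ∈ sh, t n q)
        = (sh.sigma (fun n => Finset.Icc 1 (t n q))).card := by
      rw [Finset.card_sigma]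
      exact Finset.sum_congr rfl (fun n _ => by rw [Nat.card_Icc]; omega)
    rw [hsum]
    apply Finset.card_le_card_of_injOn (fun s => s.1 / q ^ (d q * s.2))
    · rintro ⟨n, j⟩ hnj
      rw [Finset.mem_coe, Finset.mem_sigma] at hnj
      obtain ⟨hn, hj⟩ := hnj
      rw [Finset.mem_Icc] at hj
      obtain ⟨hj1, hjt⟩ := hj
      obtain ⟨hn1, hnx, hgt, hsmooth⟩ := hsh_mem n hn
      have hdj : d q * j ≤ n.factorization q := by
        have h := (Nat.le_div_iff_mul_le hdq).mp hjt
        rwa [mul_comm] at h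
      have hdvd : q ^ (d q * j) ∣ n :=
        dvd_trans (pow_dvd_pow q hdj) (Nat.ordProj_dvd n q)
      have hK0 : 0 < q ^ (d q * j) := pow_pos (by omega) _
      have hmK : (n / q ^ (d q * j)) * q ^ (d q * j) = n := Nat.div_mul_cancel hdvd
      have hm1 : 1 ≤ n / q ^ (d q * j) :=
        (Nat.one_le_div_iff hK0).mpr (Nat.le_of_dvd (by omega) hdvd)
      have hKy : y ≤ ((q:ℝ)) ^ (d q * j) := by
        calc y ≤ (q:ℝ) ^ (d q) := hD_ge q hq
          _ ≤ (q:ℝ) ^ (d q * j) := by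
              apply pow_le_pow_right₀ (by exact_mod_cast hq1.le)
              calc d q = d q * 1 := (mul_one _).symm
                _ ≤ d q * j := Nat.mul_le_mul_left _ hj1
      have hmle : ((n / q ^ (d q * j) : ℕ) : ℝ) ≤ x / y := by
        rw [le_div_iff₀ hy0]
        have hcast : ((n / q ^ (d q * j) : ℕ) : ℝ) * ((q:ℝ) ^ (d q * j)) = (n:ℝ) := by
          exact_mod_cast congrArg (Nat.cast : ℕ → ℝ) hmK
        calc ((n / q ^ (d q * j) : ℕ) : ℝ) * y
            ≤ ((n / q ^ (d q * j) : ℕ) : ℝ) * ((q:ℝ) ^ (d q * j)) :=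
              mul_le_mul_of_nonneg_left hKy (by positivity)
          _ = (n:ℝ) := hcast
          _ ≤ x := hnx
      simp only [Finset.mem_coe, hSrdef, smoothFinset, Finset.mem_filter, Finset.mem_Icc]
      refine ⟨⟨hm1, Nat.le_floor hmle⟩, ?_⟩
      intro p hpp hpd
      exact hsmooth p hpp (hpd.trans (Nat.div_dvd_of_dvd hdvd))
    · rintro ⟨n, j⟩ hnj ⟨n', j'⟩ hnj' heq
      simp only [Finset.coe_sigma, Set.mem_sigma_iff, Finset.mem_coe] at hnj hnj'
      obtain ⟨hn, hj⟩ := hnj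
      obtain ⟨hn', hj'⟩ := hnj'
      rw [Finset.mem_Icc] at hj hj'
      simp only at heq
      have hdj : d q * j ≤ n.factorization q := by
        have h := (Nat.le_div_iff_mul_le hdq).mp hj.2
        rwa [mul_comm] at h
      have hdj' : d q * j' ≤ n'.factorization q := by
        have h := (Nat.le_div_iff_mul_le hdq).mp hj'.2
        rwa [mul_comm] at h
      have hdvd : q ^ (d q * j) ∣ n :=
        dvd_trans (pow_dvd_pow q hdj) (Nat.ordProj_dvd n q)
      have hdvd' : q ^ (d q * j') ∣ n' :=
        dvd_trans (pow_dvd_pow q hdj') (Nat.ordProj_dvd n' q)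
      obtain ⟨hn1, hnx, hgt, _⟩ := hsh_mem n hn
      obtain ⟨hn1', hnx', hgt', _⟩ := hsh_mem n' hn'
      have main : ∀ (a b ja jb : ℕ), ja < jb →
          q ^ (d q * ja) ∣ a → q ^ (d q * jb) ∣ b →
          a / q ^ (d q * ja) = b / q ^ (d q * jb) →
          x/y < (a:ℝ) → (b:ℝ) ≤ x → False := by
        intro a b ja jb hlt hda hdb hmeq hagt hbx
        have hKa : (a / q ^ (d q * ja)) * q ^ (d q * ja) = a := Nat.div_mul_cancel hda
        have hKb : (a / q ^ (d q * ja)) * q ^ (d q * jb) = b := by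
          rw [hmeq]; exact Nat.div_mul_cancel hdb
        have hexp : d q * ja + d q * (jb - ja) = d q * jb := by
          rw [← Nat.mul_add]
          congr 1
          omega
        have hfacN : a * q ^ (d q * (jb - ja)) = b := by
          conv_lhs => rw [← hKa]
          rw [mul_assoc, ← pow_add, hexp]
          exact hKb
        have hfac : (a:ℝ) * (q:ℝ) ^ (d q * (jb - ja)) = (b:ℝ) := by
          exact_mod_cast congrArg (Nat.cast : ℕ → ℝ) hfacN
        have hyle : y ≤ (q:ℝ) ^ (d q * (jb - ja)) := by
          calc y ≤ (q:ℝ) ^ (d q) := hD_ge q hq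
            _ ≤ (q:ℝ) ^ (d q * (jb - ja)) := by
                apply pow_le_pow_right₀ (by exact_mod_cast hq1.le)
                calc d q = d q * 1 := (mul_one _).symm
                  _ ≤ d q * (jb - ja) := Nat.mul_le_mul_left _ (by omega)
        have ha0 : (0:ℝ) < (a:ℝ) := lt_trans hxy0 hagt
        have hbig : x < (b:ℝ) := by
          calc x = (x/y) * y := by field_simp
            _ < (a:ℝ) * y := mul_lt_mul_of_pos_right hagt hy0
            _ ≤ (a:ℝ) * (q:ℝ) ^ (d q * (jb - ja)) :=
                mul_le_mul_of_nonneg_left hyle ha0.le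
            _ = (b:ℝ) := hfac
        linarith
      rcases lt_trichotomy j j' with h | h | h
      · exact absurd (main n n' j j' h hdvd hdvd' heq hgt hnx') not_false
      · subst h
        have heqn : n = n' := by
          have h1 : (n / q ^ (d q * j)) * q ^ (d q * j) = n := Nat.div_mul_cancel hdvd
          have h2 : (n' / q ^ (d q * j)) * q ^ (d q * j) = n' := Nat.div_mul_cancel hdvd'
          rw [← h1, ← h2, heq]
        simp [heqn]
      · exact absurd (main n' n j' j h hdvd' hdvd heq.symm hgt' hnx) not_false
  -- assemble
  set F := ∑ n ∈ sh, ∑ q ∈ P, (t n q : ℝ) * Real.log ((q:ℝ) ^ (d q)) with hFdef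
  have hF_lower : (sh.card : ℝ) * (Real.log x - Real.log y - C) ≤ F := by
    have := Finset.card_nsmul_le_sum sh
      (fun n => ∑ q ∈ P, (t n q : ℝ) * Real.log ((q:ℝ) ^ (d q)))
      (Real.log x - Real.log y - C) hlower
    rwa [nsmul_eq_mul] at this
  have hF_upper : F ≤ C * Sr.card := by
    rw [hFdef, Finset.sum_comm]
    have hterm : ∀ q ∈ P, (∑ n ∈ sh, (t n q : ℝ) * Real.log ((q:ℝ) ^ (d q)))
        ≤ (Real.log y + Real.log (q:ℝ)) * Sr.card := by
      intro q hq
      rw [← Finset.sum_mul]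
      have h1 : (∑ n ∈ sh, (t n q : ℝ)) ≤ (Sr.card : ℝ) := by
        have := hcount q hq
        calc (∑ n ∈ sh, (t n q : ℝ)) = ((∑ n ∈ sh, t n q : ℕ) : ℝ) := by push_cast; rfl
          _ ≤ (Sr.card : ℝ) := by exact_mod_cast this
      have h2 : 0 ≤ ∑ n ∈ sh, (t n q : ℝ) := Finset.sum_nonneg (fun n _ => by positivity)
      calc (∑ n ∈ sh, (t n q : ℝ)) * Real.log ((q:ℝ) ^ (d q))
          ≤ (Sr.card : ℝ) * (Real.log y + Real.log (q:ℝ)) :=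
            mul_le_mul h1 (hlogD_le q hq) (hlogD_nonneg q hq) (Nat.cast_nonneg _)
        _ = (Real.log y + Real.log (q:ℝ)) * Sr.card := by ring
    calc ∑ q ∈ P, ∑ n ∈ sh, (t n q : ℝ) * Real.log ((q:ℝ) ^ (d q))
        ≤ ∑ q ∈ P, (Real.log y + Real.log (q:ℝ)) * Sr.card := Finset.sum_le_sum hterm
      _ = C * Sr.card := by rw [hCdef, Finset.sum_mul]
  have hSrS : (Sr.card : ℝ) ≤ (S.card : ℝ) := by exact_mod_cast Finset.card_le_card hsub
  have hdenom : Real.log x / 2 ≤ Real.log x - Real.log y - C := by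
    have h8 : 8 * y ≤ Real.log x / 2 := by
      have : y ≤ (1/16) * Real.log x := le_trans hyx
        (mul_le_mul_of_nonneg_right hδ16 hlogx0.le)
      linarith
    linarith [hC7, hlogy_le]
  have hcards : (S.card : ℝ) = (sh.card : ℝ) + (Sr.card : ℝ) := by
    have := Finset.card_sdiff_add_card_eq_card hsub
    exact_mod_cast this.symm
  have hmain : (sh.card : ℝ) ≤ ε * (S.card : ℝ) := by
    have h1 : (sh.card : ℝ) * (Real.log x / 2) ≤ 7 * y * (S.card : ℝ) := by
      calc (sh.card : ℝ) * (Real.log x / 2) ≤ (sh.card : ℝ) * (Real.log x - Real.log y - C) :=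
            mul_le_mul_of_nonneg_left hdenom (Nat.cast_nonneg _)
        _ ≤ F := hF_lower
        _ ≤ C * Sr.card := hF_upper
        _ ≤ 7 * y * (S.card : ℝ) := by
            apply mul_le_mul hC7 hSrS (Nat.cast_nonneg _) (by linarith)
    have h2 : 7 * y * (S.card : ℝ) ≤ 7 * (δ * Real.log x) * (S.card : ℝ) := by
      apply mul_le_mul_of_nonneg_right _ (Nat.cast_nonneg _)
      linarith
    have h3 : (sh.card : ℝ) * (Real.log x / 2) ≤ 7 * (δ * Real.log x) * (S.card : ℝ) :=
      le_trans h1 h2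
    have h4 : (sh.card : ℝ) ≤ 14 * δ * (S.card : ℝ) := by
      have hpos : 0 < Real.log x / 2 := by linarith
      rw [← mul_le_mul_iff_of_pos_right hpos]
      calc (sh.card : ℝ) * (Real.log x / 2) ≤ 7 * (δ * Real.log x) * (S.card : ℝ) := h3
        _ = 14 * δ * (S.card : ℝ) * (Real.log x / 2) := by ring
    calc (sh.card : ℝ) ≤ 14 * δ * (S.card : ℝ) := h4
      _ ≤ ε * (S.card : ℝ) := by
          apply mul_le_mul_of_nonneg_right _ (Nat.cast_nonneg _)
          linarith
  have hPsiS : Psi x y = (S.card : ℝ) := rfl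
  have hPsiSr : Psi (x/y) y = (Sr.card : ℝ) := rfl
  rw [abs_sub_comm, hPsiS, hPsiSr, abs_of_nonneg (by linarith)]
  linarith
end

section
/- Let y ≥ 2 be real, let κ ∈ (0,1), and let N be a positive integer. Suppose p₁, …, p_N are primes with (1−κ)·y^{1−1/2^i} ≤ p_i ≤ y^{1−1/2^i} for each 1 ≤ i ≤ N, and q₁, …, q_N are primes with (1−κ)·y ≤ q_i ≤ y for each 1 ≤ i ≤ N. Then for every integer j with 0 ≤ j ≤ 2^N − 1, the integer D := Π_{i=1}^{N} p_i·q_i has a positive divisor D_j satisfying (1−κ)^N · y^{N − j/2^N} ≤ D_j ≤ y^{N − j/2^N}. -/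
open Real

lemma bits_lemma : ∀ N j : ℕ, j < 2 ^ N →
    ∃ S : Finset ℕ, S ⊆ Finset.range N ∧ ∑ k ∈ S, 2 ^ k = j := by
  intro N
  induction N with
  | zero => intro j hj; exact ⟨∅, by simp, by simpa using (Nat.lt_one_iff.mp hj).symm⟩
  | succ n ih =>
    intro j hj
    by_cases h : j < 2 ^ n
    · obtain ⟨S, hS, hsum⟩ := ih j h
      exact ⟨S, hS.trans (Finset.range_subset_range.mpr (Nat.le_succ n)), hsum⟩
    · obtain ⟨S, hS, hsum⟩ := ih (j - 2 ^ n) (by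
        have := Nat.pow_succ 2 n; omega)
      refine ⟨insert n S, ?_, ?_⟩
      · intro x hx
        rcases Finset.mem_insert.mp hx with rfl | hx
        · exact Finset.self_mem_range_succ x
        · exact Finset.range_subset_range.mpr (Nat.le_succ n) (hS hx)
      · have hn : n ∉ S := fun h' => by simpa using hS h'
        rw [Finset.sum_insert hn, hsum]; omega

/-- Corollary 1 (second part): if `p_i ∈ [(1−κ)y^{1−1/2^i}, y^{1−1/2^i}]` and
`q_i ∈ [(1−κ)y, y]` are primes for `1 ≤ i ≤ N`, then for each `0 ≤ j ≤ 2^N − 1`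
the product `D = Π p_i q_i` has a divisor `D_j` with
`(1−κ)^N y^{N−j/2^N} ≤ D_j ≤ y^{N−j/2^N}`. -/
theorem stmt_9 (y : ℝ) (hy : 2 ≤ y) (κ : ℝ) (hκ0 : 0 < κ) (hκ1 : κ < 1)
    (N : ℕ) (hN : 0 < N) (p q : ℕ → ℕ)
    (hp : ∀ i : ℕ, 1 ≤ i → i ≤ N → (p i).Prime ∧
      (1 - κ) * y ^ (1 - 1 / (2 : ℝ) ^ i) ≤ (p i : ℝ) ∧
      (p i : ℝ) ≤ y ^ (1 - 1 / (2 : ℝ) ^ i))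
    (hq : ∀ i : ℕ, 1 ≤ i → i ≤ N → (q i).Prime ∧
      (1 - κ) * y ≤ (q i : ℝ) ∧ (q i : ℝ) ≤ y) :
    ∀ j : ℕ, j ≤ 2 ^ N - 1 →
      ∃ D_j : ℕ, 0 < D_j ∧ D_j ∣ (∏ i ∈ Finset.Icc 1 N, p i * q i) ∧
        (1 - κ) ^ N * y ^ ((N : ℝ) - (j : ℝ) / 2 ^ N) ≤ (D_j : ℝ) ∧
        (D_j : ℝ) ≤ y ^ ((N : ℝ) - (j : ℝ) / 2 ^ N) := by
  intro j hj
  have hy0 : (0:ℝ) < y := by linarith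
  have h2N : 1 ≤ 2 ^ N := Nat.one_le_two_pow
  obtain ⟨S, hS, hsum⟩ := bits_lemma N j (by omega)
  set T : Finset ℕ := S.image (fun k => N - k) with hT
  have hTmem : ∀ i ∈ T, 1 ≤ i ∧ i ≤ N := by
    intro i hi
    obtain ⟨k, hk, rfl⟩ := Finset.mem_image.mp hi
    have := Finset.mem_range.mp (hS hk)
    omega
  have hTsub : T ⊆ Finset.Icc 1 N := fun i hi =>
    Finset.mem_Icc.mpr ⟨(hTmem i hi).1, (hTmem i hi).2⟩
  -- key sum identity
  have hsumT : ∑ i ∈ T, (1:ℝ) / 2 ^ i = (j:ℝ) / 2 ^ N := by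
    rw [hT, Finset.sum_image (by
      intro a ha b hb hab
      have ha' := Finset.mem_range.mp (hS ha)
      have hb' := Finset.mem_range.mp (hS hb)
      have hab' : N - a = N - b := hab
      omega)]
    have : ∀ k ∈ S, (1:ℝ) / 2 ^ (N - k) = 2 ^ k / 2 ^ N := by
      intro k hk
      have hkN : k ≤ N := le_of_lt (Finset.mem_range.mp (hS hk))
      rw [div_eq_div_iff (by positivity) (by positivity), one_mul,
        ← pow_add]
      congr 1; omega
    rw [Finset.sum_congr rfl this, ← Finset.sum_div]
    congr 1
    exact_mod_cast congrArg (Nat.cast : ℕ → ℝ) hsum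
  set e : ℕ → ℝ := fun i => if i ∈ T then 1 - 1 / (2:ℝ) ^ i else 1 with he
  have hesum : ∑ i ∈ Finset.Icc 1 N, e i = (N:ℝ) - (j:ℝ) / 2 ^ N := by
    have : ∀ i ∈ Finset.Icc 1 N, e i = 1 - (if i ∈ T then (1:ℝ) / 2 ^ i else 0) := by
      intro i _; by_cases h : i ∈ T <;> simp [he, h]
    rw [Finset.sum_congr rfl this, Finset.sum_sub_distrib, Finset.sum_ite_mem,
      Finset.inter_eq_right.mpr hTsub, hsumT]
    simp [Nat.card_Icc]
  refine ⟨∏ i ∈ Finset.Icc 1 N, (if i ∈ T then p i else q i), ?_, ?_, ?_, ?_⟩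
  · apply Finset.prod_pos
    intro i hi
    obtain ⟨h1, h2⟩ := Finset.mem_Icc.mp hi
    by_cases h : i ∈ T <;> simp only [h, if_true, if_false]
    · exact (hp i h1 h2).1.pos
    · exact (hq i h1 h2).1.pos
  · apply Finset.prod_dvd_prod_of_dvd
    intro i _
    by_cases h : i ∈ T <;> simp only [h, if_true, if_false]
    · exact dvd_mul_right _ _
    · exact dvd_mul_left _ _
  · -- lower bound
    push_cast [apply_ite (Nat.cast : ℕ → ℝ)]
    rw [← hesum, Real.rpow_sum_of_pos hy0,
      show (1-κ)^N = ∏ _x ∈ Finset.Icc 1 N, (1-κ) by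
        rw [Finset.prod_const, Nat.card_Icc, Nat.add_sub_cancel],
      ← Finset.prod_mul_distrib]
    apply Finset.prod_le_prod
    · intro i _
      have h1κ : (0:ℝ) < 1 - κ := by linarith
      positivity
    · intro i hi
      obtain ⟨h1, h2⟩ := Finset.mem_Icc.mp hi
      by_cases h : i ∈ T <;> simp only [he, h, if_true, if_false]
      · exact (hp i h1 h2).2.1
      · rw [Real.rpow_one]; exact (hq i h1 h2).2.1
  · push_cast [apply_ite (Nat.cast : ℕ → ℝ)]
    rw [← hesum, Real.rpow_sum_of_pos hy0]
    apply Finset.prod_le_prod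
    · intro i _; positivity
    · intro i hi
      obtain ⟨h1, h2⟩ := Finset.mem_Icc.mp hi
      by_cases h : i ∈ T <;> simp only [he, h, if_true, if_false]
      · exact (hp i h1 h2).2.2
      · rw [Real.rpow_one]; exact (hq i h1 h2).2.2
end
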